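/- Let a ∈ C¹([-1,1]) be positive on (-1,1), vanish at ±1, with A(x) = ∫₀ˣ ds/a(s) ∈ L¹(-1,1). Then for every R > 0, sup over u ∈ H¹_a(-1,1) with ‖u‖_{H¹_a} ≤ R of ∫_{1-h}^{1} |u(x)|² dx tends to 0 as h → 0⁺. (Uniform smallness of L² mass near the degenerate endpoint.) -/

import Mathlib

open MeasureTheory Set Real

lemma holder_diff_bound
    (a : ℝ → ℝ) (ha : ContDiffOn ℝ 1 a (Icc (-1) 1))
    (hapos : ∀ x ∈ Ioo (-1:ℝ) 1, 0 < a x)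
    (A : ℝ → ℝ) (hA : ∀ x, A x = ∫ s in (0:ℝ)..x, 1 / a s)
    (R : ℝ) (hR : 0 < R)
    (u u' : ℝ → ℝ)
    (hderiv : ∀ x ∈ Ioo (-1:ℝ) 1, HasDerivAt u (u' x) x)
    (hau : MemLp (fun x => Real.sqrt (a x) * u' x) 2 (volume.restrict (Ioo (-1) 1)))
    (hEnergy : (∫ x in Ioo (-1:ℝ) 1, a x * u' x ^ 2) ≤ R ^ 2)
    (y x : ℝ) (hy0 : 0 < y) (hyx : y < x) (hx1 : x < 1) :
    (u x - u y) ^ 2 ≤ R ^ 2 * (A x - A y) := by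
  have hIcc : Icc y x ⊆ Ioo (-1:ℝ) 1 := fun s hs => ⟨by linarith [hs.1], lt_of_le_of_lt hs.2 hx1⟩
  have hIoc : Ioc y x ⊆ Ioo (-1:ℝ) 1 := fun s hs => hIcc ⟨hs.1.le, hs.2⟩
  have hcontA : ContinuousOn a (Icc (-1:ℝ) 1) := ha.continuousOn
  have hcontyx : ContinuousOn a (Icc y x) := hcontA.mono (hIcc.trans Ioo_subset_Icc_self)
  -- min of a on Icc y x
  obtain ⟨s₀, hs₀, hmin⟩ := isCompact_Icc.exists_isMinOn (nonempty_Icc.2 hyx.le) hcontyx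
  set m := a s₀ with hm
  have hmpos : 0 < m := hapos s₀ (hIcc hs₀)
  set ν := volume.restrict (Ioc y x) with hν
  haveI : IsFiniteMeasure ν := ⟨by
    rw [hν, Measure.restrict_apply_univ]; exact measure_Ioc_lt_top⟩
  have hle : ν ≤ volume.restrict (Ioo (-1:ℝ) 1) := Measure.restrict_mono hIoc le_rfl
  set F : ℝ → ℝ := fun s => Real.sqrt (a s) * u' s with hF
  have hFν : MemLp F 2 ν := hau.mono_measure hle
  set g : ℝ → ℝ := fun s => 1 / Real.sqrt (a s) with hg
  have hgcont : ContinuousOn g (Ioc y x) := by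
    apply continuousOn_const.div
    · exact (Real.continuous_sqrt.comp_continuousOn (hcontyx.mono Ioc_subset_Icc_self))
    · intro s hs
      exact (Real.sqrt_pos.2 (hapos s (hIoc hs))).ne'
  have hgmeas : AEStronglyMeasurable g ν :=
    hgcont.aestronglyMeasurable measurableSet_Ioc
  have hgbound : ∀ᵐ s ∂ν, ‖g s‖ ≤ 1 / Real.sqrt m := by
    rw [hν, ae_restrict_iff' measurableSet_Ioc]
    refine ae_of_all _ (fun s hs => ?_)
    have h1 : Real.sqrt m ≤ Real.sqrt (a s) := Real.sqrt_le_sqrt (hmin ⟨hs.1.le, hs.2⟩)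
    have h2 : (0:ℝ) < Real.sqrt m := Real.sqrt_pos.2 hmpos
    rw [Real.norm_eq_abs, hg, abs_of_nonneg (by positivity)]
    exact one_div_le_one_div_of_le h2 h1
  have hgν : MemLp g 2 ν := MemLp.of_bound hgmeas _ hgbound
  have hgnonneg : 0 ≤ᵐ[ν] g := ae_of_all _ (fun s => by positivity)
  have hFabs : MemLp (fun s => |F s|) 2 ν := hFν.abs
  have hFnonneg : 0 ≤ᵐ[ν] (fun s => |F s|) := ae_of_all _ (fun s => abs_nonneg _)
  have hconj : Real.HolderConjugate 2 2 := ⟨by norm_num, by norm_num, by norm_num⟩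
  have hof2 : ENNReal.ofReal (2:ℝ) = 2 := by norm_num
  have hCS := MeasureTheory.integral_mul_le_Lp_mul_Lq_of_nonneg hconj hFnonneg hgnonneg
      (hof2 ▸ hFabs) (hof2 ▸ hgν)
  have hrp : ∀ z : ℝ, z ^ (2:ℝ) = z ^ 2 := fun z => by
    rw [show (2:ℝ) = ((2:ℕ):ℝ) by norm_num, Real.rpow_natCast]
  simp only [hrp, ← Real.sqrt_eq_rpow] at hCS
  set P := ∫ s, |F s| ^ 2 ∂ν with hP
  set Q := ∫ s, g s ^ 2 ∂ν with hQ
  have hPnonneg : 0 ≤ P := integral_nonneg (fun s => sq_nonneg _)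
  have hQnonneg : 0 ≤ Q := integral_nonneg (fun s => sq_nonneg _)
  -- P ≤ R^2
  have hFsq_int : Integrable (fun s => F s ^ 2) (volume.restrict (Ioo (-1:ℝ) 1)) :=
    hau.integrable_sq
  have hPle : P ≤ R ^ 2 := by
    have e1 : P = ∫ s in Ioc y x, F s ^ 2 := by
      rw [hP, hν]; exact setIntegral_congr_fun measurableSet_Ioc (fun s _ => sq_abs _)
    have e2 : (∫ s in Ioc y x, F s ^ 2) ≤ ∫ s in Ioo (-1:ℝ) 1, F s ^ 2 :=
      setIntegral_mono_set hFsq_int (ae_of_all _ (fun s => sq_nonneg _))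
        (HasSubset.Subset.eventuallyLE hIoc)
    have e3 : (∫ s in Ioo (-1:ℝ) 1, F s ^ 2) = ∫ s in Ioo (-1:ℝ) 1, a s * u' s ^ 2 := by
      refine setIntegral_congr_fun measurableSet_Ioo (fun s hs => ?_)
      rw [hF]; simp only
      rw [mul_pow, Real.sq_sqrt (hapos s hs).le]
    rw [e1]; rw [e3] at e2; linarith
  -- 1/a interval integrable
  have hinv_cont : ∀ b c : ℝ, (0:ℝ) ≤ b → c < 1 → b ≤ c →
      IntervalIntegrable (fun s => 1 / a s) volume b c := by
    intro b c hb hc hbc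
    have hsub : Icc b c ⊆ Ioo (-1:ℝ) 1 := fun s hs => ⟨by linarith [hs.1], lt_of_le_of_lt hs.2 hc⟩
    apply ContinuousOn.intervalIntegrable
    rw [uIcc_of_le hbc]
    exact continuousOn_const.div (hcontA.mono (hsub.trans Ioo_subset_Icc_self))
      (fun s hs => (hapos s (hsub hs)).ne')
  -- Q = A x - A y
  have hQeq : Q = A x - A y := by
    have e1 : Q = ∫ s in Ioc y x, 1 / a s := by
      rw [hQ, hν]
      refine setIntegral_congr_fun measurableSet_Ioc (fun s hs => ?_)
      rw [hg]; simp only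
      rw [div_pow, one_pow, Real.sq_sqrt (hapos s (hIoc hs)).le]
    have e2 : (∫ s in Ioc y x, 1 / a s) = ∫ s in y..x, 1 / a s :=
      (intervalIntegral.integral_of_le hyx.le).symm
    have e3 : (∫ s in y..x, 1 / a s) = A x - A y := by
      rw [hA x, hA y]
      exact (intervalIntegral.integral_interval_sub_left
        (hinv_cont 0 x le_rfl hx1 (by linarith)) (hinv_cont 0 y le_rfl (by linarith) hy0.le)).symm
    rw [e1, e2, e3]
  -- LHS of Cauchy-Schwarz is ∫ |u'|
  have hLHS : (∫ s, |F s| * g s ∂ν) = ∫ s in Ioc y x, |u' s| := by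
    rw [hν]
    refine setIntegral_congr_fun measurableSet_Ioc (fun s hs => ?_)
    have has : 0 < a s := hapos s (hIoc hs)
    have hsq : Real.sqrt (a s) ≠ 0 := (Real.sqrt_pos.2 has).ne'
    rw [hF, hg]; simp only
    rw [abs_mul, abs_of_nonneg (Real.sqrt_nonneg _), mul_comm (Real.sqrt (a s)) |u' s|,
      mul_assoc, mul_one_div, div_self hsq, mul_one]
  -- u' is interval integrable
  have hu'int : IntervalIntegrable u' volume y x := by
    rw [intervalIntegrable_iff_integrableOn_Ioc_of_le hyx.le]
    have hFint : Integrable F ν := hFν.integrable (by norm_num)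
    have : Integrable (fun s => g s * F s) ν := hFint.bdd_mul hgmeas hgbound
    refine this.congr ?_
    rw [hν, Filter.EventuallyEq, ae_restrict_iff' measurableSet_Ioc]
    refine ae_of_all _ (fun s hs => ?_)
    have has : 0 < a s := hapos s (hIoc hs)
    have hsq : Real.sqrt (a s) ≠ 0 := (Real.sqrt_pos.2 has).ne'
    rw [hg, hF]; simp only
    rw [one_div, inv_mul_eq_div, mul_comm (Real.sqrt (a s)) (u' s), mul_div_assoc,
      div_self hsq, mul_one]
  -- FTC
  have hFTC : ∫ t in y..x, u' t = u x - u y := by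
    apply intervalIntegral.integral_eq_sub_of_hasDerivAt
    · intro t ht
      rw [uIcc_of_le hyx.le] at ht
      exact hderiv t (hIcc ht)
    · exact hu'int
  have habs : |u x - u y| ≤ ∫ s in Ioc y x, |u' s| := by
    rw [← hFTC]
    calc |∫ t in y..x, u' t| ≤ ∫ t in y..x, |u' t| :=
          intervalIntegral.abs_integral_le_integral_abs hyx.le
      _ = ∫ s in Ioc y x, |u' s| := intervalIntegral.integral_of_le hyx.le
  -- combine
  have hd : |u x - u y| ≤ Real.sqrt P * Real.sqrt Q := by
    rw [hLHS] at hCS; linarith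
  have hsq2 : (u x - u y) ^ 2 ≤ (Real.sqrt P * Real.sqrt Q) ^ 2 := by
    rw [← sq_abs]
    exact pow_le_pow_left₀ (abs_nonneg _) hd 2
  rw [mul_pow, Real.sq_sqrt hPnonneg, Real.sq_sqrt hQnonneg] at hsq2
  calc (u x - u y) ^ 2 ≤ P * Q := hsq2
    _ ≤ R ^ 2 * Q := mul_le_mul_of_nonneg_right hPle hQnonneg
    _ = R ^ 2 * (A x - A y) := by rw [hQeq]

theorem uniform_smallness_near_endpoint
    (a : ℝ → ℝ) (ha : ContDiffOn ℝ 1 a (Icc (-1) 1))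
    (hapos : ∀ x ∈ Ioo (-1:ℝ) 1, 0 < a x)
    (ha1 : a (-1) = 0) (ha2 : a 1 = 0)
    (A : ℝ → ℝ) (hA : ∀ x, A x = ∫ s in (0:ℝ)..x, 1 / a s)
    (hAint : IntegrableOn A (Ioo (-1) 1))
    (R : ℝ) (hR : 0 < R) :
    ∀ ε > 0, ∃ δ > 0, ∀ h : ℝ, 0 < h → h < δ →
      ∀ (u u' : ℝ → ℝ),
        (∀ x ∈ Ioo (-1:ℝ) 1, HasDerivAt u (u' x) x) →
        MemLp u 2 (volume.restrict (Ioo (-1) 1)) →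
        MemLp (fun x => Real.sqrt (a x) * u' x) 2 (volume.restrict (Ioo (-1) 1)) →
        (∫ x in Ioo (-1:ℝ) 1, u x ^ 2) + (∫ x in Ioo (-1:ℝ) 1, a x * u' x ^ 2) ≤ R ^ 2 →
        ∫ x in Ioo (1 - h) 1, u x ^ 2 ≤ ε := by
  intro ε hε
  set μ := volume.restrict (Ioo (-1:ℝ) 1) with hμ
  set g : ℝ → ℝ := fun x => 8 * R ^ 2 + 2 * R ^ 2 * A x with hgdef
  have hgint : Integrable g μ := by
    refine Integrable.add ?_ (hAint.const_mul (2 * R ^ 2))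
    exact integrableOn_const measure_Ioo_lt_top.ne
  -- the measure of Ioo (1-h) 1 tends to 0
  have hmeas : Filter.Tendsto (fun h : ℝ => μ (Ioo (1 - h) 1)) (nhdsWithin 0 (Ioi 0)) (nhds 0) := by
    have hub : ∀ h : ℝ, μ (Ioo (1 - h) 1) ≤ ENNReal.ofReal h := by
      intro h
      calc μ (Ioo (1 - h) 1) ≤ volume (Ioo (1 - h) 1) := Measure.restrict_le_self _
        _ = ENNReal.ofReal (1 - (1 - h)) := Real.volume_Ioo
        _ = ENNReal.ofReal h := by ring_nf
    have hto : Filter.Tendsto (fun h : ℝ => ENNReal.ofReal h) (nhdsWithin 0 (Ioi 0)) (nhds 0) := by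
      have h1 : Filter.Tendsto (fun h : ℝ => h) (nhdsWithin 0 (Ioi 0)) (nhds 0) :=
        Filter.tendsto_id.mono_left nhdsWithin_le_nhds
      simpa using ENNReal.tendsto_ofReal h1
    exact tendsto_of_tendsto_of_tendsto_of_le_of_le tendsto_const_nhds hto
      (fun h => zero_le) hub
  have htend := hgint.tendsto_setIntegral_nhds_zero hmeas
  have hev : ∀ᶠ h : ℝ in nhdsWithin 0 (Ioi 0),
      ((∫ x in Ioo (1 - h) 1, g x ∂μ) < ε ∧ h < 1/2) := by
    refine (htend.eventually_lt_const hε).and ?_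
    exact eventually_nhdsWithin_of_eventually_nhds (eventually_lt_nhds (by norm_num))
  obtain ⟨δ, hδ0, hδ⟩ := mem_nhdsGT_iff_exists_Ioo_subset.1 hev
  refine ⟨δ, hδ0, ?_⟩
  intro h hh hhδ u u' hderiv hu hau hbound
  obtain ⟨hgε, hh2⟩ := hδ ⟨hh, hhδ⟩
  have hsub : Ioo (1 - h) 1 ⊆ Ioo (-1:ℝ) 1 := fun x hx => ⟨by linarith [hx.1], hx.2⟩
  -- basic integrabilities and nonnegativity
  have huSq : Integrable (fun x => u x ^ 2) μ := hu.integrable_sq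
  have hInn : (0:ℝ) ≤ ∫ x in Ioo (-1:ℝ) 1, a x * u' x ^ 2 := by
    refine setIntegral_nonneg measurableSet_Ioo (fun x hx => ?_)
    exact mul_nonneg (hapos x hx).le (sq_nonneg _)
  have huSqnn : (0:ℝ) ≤ ∫ x in Ioo (-1:ℝ) 1, u x ^ 2 :=
    setIntegral_nonneg measurableSet_Ioo (fun x _ => sq_nonneg _)
  have hMass : (∫ x in Ioo (-1:ℝ) 1, u x ^ 2) ≤ R ^ 2 := by linarith
  have hEnergy : (∫ x in Ioo (-1:ℝ) 1, a x * u' x ^ 2) ≤ R ^ 2 := by linarith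
  -- find a good point y in (0, 1/2)
  obtain ⟨y, hy, hyb⟩ : ∃ y ∈ Ioo (0:ℝ) (1/2), u y ^ 2 ≤ 4 * R ^ 2 := by
    by_contra hcon
    push_neg at hcon
    have hsub2 : Ioo (0:ℝ) (1/2) ⊆ Ioo (-1:ℝ) 1 := fun x hx => ⟨by linarith [hx.1], by linarith [hx.2]⟩
    have h1 : (∫ x in Ioo (0:ℝ) (1/2), (4 * R ^ 2 : ℝ)) ≤ ∫ x in Ioo (0:ℝ) (1/2), u x ^ 2 := by
      refine setIntegral_mono_on (integrableOn_const measure_Ioo_lt_top.ne)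
        (huSq.mono_measure (Measure.restrict_mono hsub2 le_rfl)) measurableSet_Ioo ?_
      exact fun x hx => (hcon x hx).le
    have h2 : (∫ x in Ioo (0:ℝ) (1/2), u x ^ 2) ≤ ∫ x in Ioo (-1:ℝ) 1, u x ^ 2 :=
      setIntegral_mono_set huSq (ae_of_all _ (fun x => sq_nonneg _))
        (HasSubset.Subset.eventuallyLE hsub2)
    have h3 : (∫ x in Ioo (0:ℝ) (1/2), (4 * R ^ 2 : ℝ)) = 2 * R ^ 2 := by
      rw [setIntegral_const, measureReal_def, Real.volume_Ioo]
      rw [ENNReal.toReal_ofReal (by norm_num), smul_eq_mul]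
      ring
    nlinarith
  -- pointwise bound on Ioo (1-h) 1
  have key : ∀ x ∈ Ioo (1 - h) 1, u x ^ 2 ≤ g x := by
    intro x hx
    have hyx : y < x := by
      have := hy.2; have := hx.1; linarith
    have hdiff := holder_diff_bound a ha hapos A hA R hR u u' hderiv hau hEnergy
      y x hy.1 hyx hx.2
    have hAy : 0 ≤ A y := by
      rw [hA]
      refine intervalIntegral.integral_nonneg hy.1.le (fun s hs => ?_)
      have : 0 < a s := hapos s ⟨by linarith [hs.1], by linarith [hs.2, hy.2]⟩
      positivity
    have hsq : u x ^ 2 ≤ 2 * u y ^ 2 + 2 * (u x - u y) ^ 2 := by nlinarith [sq_nonneg (u y - (u x - u y))]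
    have hAxy : R ^ 2 * (A x - A y) ≤ R ^ 2 * A x := by nlinarith
    rw [hgdef]; simp only
    nlinarith
  -- conclude
  have hIio : IntegrableOn (fun x => u x ^ 2) (Ioo (1 - h) 1) :=
    huSq.mono_measure (Measure.restrict_mono hsub le_rfl)
  have hgIio : IntegrableOn g (Ioo (1 - h) 1) :=
    hgint.mono_measure (Measure.restrict_mono hsub le_rfl)
  have hmono : (∫ x in Ioo (1 - h) 1, u x ^ 2) ≤ ∫ x in Ioo (1 - h) 1, g x :=
    setIntegral_mono_on hIio hgIio measurableSet_Ioo key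
  have heq : (∫ x in Ioo (1 - h) 1, g x ∂μ) = ∫ x in Ioo (1 - h) 1, g x := by
    rw [hμ, Measure.restrict_restrict measurableSet_Ioo, inter_eq_self_of_subset_left hsub]
  rw [heq] at hgε
  linarith
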